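/- Let X and Y be Banach spaces with C-finitely Fredholm equivalent shrinking Schauder decompositions, for some C ≥ 1. Then the quotient Banach algebras HA(X)/K(X) and HA(Y)/K(Y) are isomorphic as Banach algebras, via an isomorphism Φ̂ with ‖Φ̂‖·‖Φ̂⁻¹‖ ≤ C². -/

import Mathlib

open Filter Topology

namespace S8

variable {E F G : Type*} [NormedAddCommGroup E] [NormedSpace ℂ E]
  [NormedAddCommGroup F] [NormedSpace ℂ F] [NormedAddCommGroup G] [NormedSpace ℂ G]

lemma opnorm_le_unit (T : E →L[ℂ] F) {c : ℝ} (hc : 0 ≤ c)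
    (h : ∀ x : E, ‖x‖ ≤ 1 → ‖T x‖ ≤ c) : ‖T‖ ≤ c := by
  refine T.opNorm_le_bound hc fun x => ?_
  rcases eq_or_ne x 0 with rfl | hx
  · simp [hc]
  · have hxn : 0 < ‖x‖ := norm_pos_iff.2 hx
    have h1 : ‖(‖x‖⁻¹ : ℂ) • x‖ ≤ 1 := by
      rw [norm_smul]
      simp [abs_of_nonneg hxn.le, inv_mul_cancel₀ hxn.ne']
    have h2 := h _ h1
    rw [map_smul, norm_smul] at h2
    have h3 : ‖((‖x‖ : ℂ))⁻¹‖ = ‖x‖⁻¹ := by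
      rw [norm_inv, Complex.norm_real, Real.norm_eq_abs, abs_of_nonneg hxn.le]
    rw [h3] at h2
    have h4 := mul_le_mul_of_nonneg_left h2 hxn.le
    calc ‖T x‖ = ‖x‖ * (‖x‖⁻¹ * ‖T x‖) := by field_simp
    _ ≤ ‖x‖ * c := h4
    _ = c * ‖x‖ := mul_comm _ _

noncomputable def cdK (A : E →L[ℂ] E) : ℝ :=
  sInf {r : ℝ | ∃ K : E →L[ℂ] E, IsCompactOperator ⇑K ∧ r = ‖A - K‖}

lemma cdK_set_nonempty (A : E →L[ℂ] E) :
    {r : ℝ | ∃ K : E →L[ℂ] E, IsCompactOperator ⇑K ∧ r = ‖A - K‖}.Nonempty :=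
  ⟨‖A - 0‖, 0, by simpa using isCompactOperator_zero, rfl⟩

lemma cdK_set_bdd (A : E →L[ℂ] E) :
    BddBelow {r : ℝ | ∃ K : E →L[ℂ] E, IsCompactOperator ⇑K ∧ r = ‖A - K‖} :=
  ⟨0, by rintro r ⟨K, -, rfl⟩; positivity⟩

lemma cdK_nonneg (A : E →L[ℂ] E) : 0 ≤ cdK A :=
  le_csInf (cdK_set_nonempty A) (by rintro r ⟨K, -, rfl⟩; positivity)

lemma cdK_le (A : E →L[ℂ] E) {K : E →L[ℂ] E} (hK : IsCompactOperator ⇑K) :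
    cdK A ≤ ‖A - K‖ :=
  csInf_le (cdK_set_bdd A) ⟨K, hK, rfl⟩

lemma cdK_le_norm (A : E →L[ℂ] E) : cdK A ≤ ‖A‖ := by
  simpa using cdK_le A (K := 0) (by simpa using isCompactOperator_zero)

lemma exists_compact_close (A : E →L[ℂ] E) {ε : ℝ} (hε : 0 < ε) :
    ∃ K : E →L[ℂ] E, IsCompactOperator ⇑K ∧ ‖A - K‖ < cdK A + ε := by
  obtain ⟨r, ⟨K, hK, rfl⟩, hr⟩ := Real.lt_sInf_add_pos (cdK_set_nonempty A) hε
  exact ⟨K, hK, hr⟩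

lemma cdK_zero_of_compact {A : E →L[ℂ] E} (hA : IsCompactOperator ⇑A) : cdK A = 0 :=
  le_antisymm (by simpa using cdK_le A hA) (cdK_nonneg A)

lemma compact_of_cdK_zero [CompleteSpace E] {A : E →L[ℂ] E} (hA : cdK A = 0) :
    IsCompactOperator ⇑A := by
  have hcl : IsClosed {f : E →L[ℂ] E | IsCompactOperator ⇑f} :=
    isClosed_setOf_isCompactOperator
  have : A ∈ closure {f : E →L[ℂ] E | IsCompactOperator ⇑f} := by
    rw [Metric.mem_closure_iff]
    intro ε hε
    obtain ⟨K, hK, hKd⟩ := exists_compact_close A hε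
    refine ⟨K, hK, ?_⟩
    rw [dist_eq_norm]
    rw [hA, zero_add] at hKd
    exact hKd
  exact hcl.closure_subset this

lemma cdK_add_le (A B : E →L[ℂ] E) : cdK (A + B) ≤ cdK A + cdK B := by
  refine le_of_forall_pos_le_add fun ε hε => ?_
  obtain ⟨K, hK, hKd⟩ := exists_compact_close A (half_pos hε)
  obtain ⟨K', hK', hKd'⟩ := exists_compact_close B (half_pos hε)
  calc cdK (A + B) ≤ ‖(A + B) - (K + K')‖ := cdK_le _ (hK.add hK')
  _ ≤ ‖A - K‖ + ‖B - K'‖ := by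
      rw [show (A + B) - (K + K') = (A - K) + (B - K') by abel]
      exact norm_add_le _ _
  _ ≤ (cdK A + ε / 2) + (cdK B + ε / 2) := add_le_add hKd.le hKd'.le
  _ = cdK A + cdK B + ε := by ring

lemma cdK_neg (A : E →L[ℂ] E) : cdK (-A) = cdK A := by
  have key : ∀ B : E →L[ℂ] E, cdK (-B) ≤ cdK B := by
    intro B
    refine le_of_forall_pos_le_add fun ε hε => ?_
    obtain ⟨K, hK, hKd⟩ := exists_compact_close B hε
    calc cdK (-B) ≤ ‖(-B) - (-K)‖ := cdK_le _ hK.neg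
    _ = ‖B - K‖ := by rw [show (-B) - (-K) = -(B - K) by abel, norm_neg]
    _ ≤ cdK B + ε := hKd.le
  exact le_antisymm (key A) (by simpa using key (-A))

lemma cdK_le_cdK_add_norm (A B : E →L[ℂ] E) : cdK A ≤ cdK B + ‖A - B‖ := by
  calc cdK A = cdK (B + (A - B)) := by rw [add_sub_cancel]
  _ ≤ cdK B + cdK (A - B) := cdK_add_le _ _
  _ ≤ cdK B + ‖A - B‖ := by linarith [cdK_le_norm (A - B)]

lemma cdK_smul_le (c : ℂ) (A : E →L[ℂ] E) : cdK (c • A) ≤ ‖c‖ * cdK A := by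
  refine le_of_forall_pos_le_add fun ε hε => ?_
  have hd : (0 : ℝ) < ε / (‖c‖ + 1) := by positivity
  obtain ⟨K, hK, hKd⟩ := exists_compact_close A hd
  calc cdK (c • A) ≤ ‖c • A - c • K‖ := cdK_le _ (hK.smul c)
  _ = ‖c‖ * ‖A - K‖ := by rw [← smul_sub, norm_smul]
  _ ≤ ‖c‖ * (cdK A + ε / (‖c‖ + 1)) := mul_le_mul_of_nonneg_left hKd.le (norm_nonneg c)
  _ = ‖c‖ * cdK A + ‖c‖ * (ε / (‖c‖ + 1)) := by ring
  _ ≤ ‖c‖ * cdK A + ε := by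
      have h1 : ‖c‖ * (ε / (‖c‖ + 1)) ≤ ε := by
        rw [mul_div_assoc']
        rw [div_le_iff₀ (by positivity)]
        nlinarith [norm_nonneg c, hε.le]
      linarith

/-- distance to compacts of `L ∘ T ∘ R` -/
lemma cdK_conj_le (T : E →L[ℂ] E) (Lo : E →L[ℂ] F) (Ro : F →L[ℂ] E) :
    cdK ((Lo.comp T).comp Ro) ≤ ‖Lo‖ * ‖Ro‖ * cdK T := by
  refine le_of_forall_pos_le_add fun ε hε => ?_
  have hd : (0 : ℝ) < ε / (‖Lo‖ * ‖Ro‖ + 1) := by positivity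
  obtain ⟨K, hK, hKd⟩ := exists_compact_close T hd
  have hKc : IsCompactOperator ⇑((Lo.comp K).comp Ro) := (hK.comp_clm Ro).clm_comp Lo
  calc cdK ((Lo.comp T).comp Ro) ≤ ‖(Lo.comp T).comp Ro - (Lo.comp K).comp Ro‖ :=
        cdK_le _ hKc
  _ = ‖(Lo.comp (T - K)).comp Ro‖ := by
      congr 1
      ext x; simp
  _ ≤ ‖Lo‖ * ‖T - K‖ * ‖Ro‖ := by
      calc ‖(Lo.comp (T - K)).comp Ro‖ ≤ ‖Lo.comp (T - K)‖ * ‖Ro‖ :=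
            ContinuousLinearMap.opNorm_comp_le _ _
      _ ≤ ‖Lo‖ * ‖T - K‖ * ‖Ro‖ := by
          gcongr; exact ContinuousLinearMap.opNorm_comp_le _ _
  _ ≤ (‖Lo‖ * ‖Ro‖) * (cdK T + ε / (‖Lo‖ * ‖Ro‖ + 1)) := by
      rw [show ‖Lo‖ * ‖T - K‖ * ‖Ro‖ = (‖Lo‖ * ‖Ro‖) * ‖T - K‖ by ring]
      exact mul_le_mul_of_nonneg_left hKd.le (by positivity)
  _ ≤ ‖Lo‖ * ‖Ro‖ * cdK T + ε := by
      have h1 : ‖Lo‖ * ‖Ro‖ * (ε / (‖Lo‖ * ‖Ro‖ + 1)) ≤ ε := by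
        rw [mul_div_assoc', div_le_iff₀ (by positivity)]
        nlinarith [norm_nonneg Lo, norm_nonneg Ro, hε.le,
          mul_nonneg (norm_nonneg Lo) (norm_nonneg Ro)]
      linarith

lemma cdK_comp_left_le (S T : E →L[ℂ] E) : cdK (S.comp T) ≤ ‖S‖ * cdK T := by
  refine le_of_forall_pos_le_add fun ε hε => ?_
  have hd : (0 : ℝ) < ε / (‖S‖ + 1) := by positivity
  obtain ⟨K, hK, hKd⟩ := exists_compact_close T hd
  calc cdK (S.comp T) ≤ ‖S.comp T - S.comp K‖ := cdK_le _ (hK.clm_comp S)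
  _ = ‖S.comp (T - K)‖ := by congr 1; ext x; simp
  _ ≤ ‖S‖ * ‖T - K‖ := ContinuousLinearMap.opNorm_comp_le _ _
  _ ≤ ‖S‖ * (cdK T + ε / (‖S‖ + 1)) := mul_le_mul_of_nonneg_left hKd.le (norm_nonneg S)
  _ ≤ ‖S‖ * cdK T + ε := by
      have : ‖S‖ * (ε / (‖S‖ + 1)) ≤ ε := by
        rw [mul_div_assoc', div_le_iff₀ (by positivity)]
        nlinarith [norm_nonneg S, hε.le]
      nlinarith [norm_nonneg S]

lemma cdK_comp_right_le (S T : E →L[ℂ] E) : cdK (S.comp T) ≤ cdK S * ‖T‖ := by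
  refine le_of_forall_pos_le_add fun ε hε => ?_
  have hd : (0 : ℝ) < ε / (‖T‖ + 1) := by positivity
  obtain ⟨K, hK, hKd⟩ := exists_compact_close S hd
  calc cdK (S.comp T) ≤ ‖S.comp T - K.comp T‖ := cdK_le _ (hK.comp_clm T)
  _ = ‖(S - K).comp T‖ := by rw [ContinuousLinearMap.sub_comp]
  _ ≤ ‖S - K‖ * ‖T‖ := ContinuousLinearMap.opNorm_comp_le _ _
  _ ≤ (cdK S + ε / (‖T‖ + 1)) * ‖T‖ := mul_le_mul_of_nonneg_right hKd.le (norm_nonneg T)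
  _ ≤ cdK S * ‖T‖ + ε := by
      have : ε / (‖T‖ + 1) * ‖T‖ ≤ ε := by
        rw [div_mul_eq_mul_div, div_le_iff₀ (by positivity)]
        nlinarith [norm_nonneg T, hε.le]
      nlinarith [norm_nonneg T]


variable {E F : Type*} [NormedAddCommGroup E] [NormedSpace ℂ E]
  [NormedAddCommGroup F] [NormedSpace ℂ F]

/-- strong convergence to 0 + uniform bound ⇒ uniform convergence on totally bounded sets -/
lemma unif_tb (T : ℕ → E →L[ℂ] F) (M : ℝ) (hM : ∀ n, ‖T n‖ ≤ M)
    (hpt : ∀ x : E, Tendsto (fun n => T n x) atTop (𝓝 0))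
    {S : Set E} (hS : TotallyBounded S) :
    ∀ ε > 0, ∃ N, ∀ n ≥ N, ∀ x ∈ S, ‖T n x‖ ≤ ε := by
  intro ε hε
  have hM0 : 0 ≤ M := (norm_nonneg _).trans (hM 0)
  have hδ : (0 : ℝ) < ε / (2 * (M + 1)) := by positivity
  obtain ⟨t, htfin, htsub⟩ := (Metric.totallyBounded_iff.1 hS) _ hδ
  have hev : ∀ᶠ n in atTop, ∀ y ∈ t, ‖T n y‖ ≤ ε / 2 := by
    rw [eventually_all_finite htfin]
    intro y _
    have h1 := (hpt y).norm
    simp only [norm_zero] at h1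
    exact h1.eventually_le_const (by positivity)
  obtain ⟨N, hN⟩ := eventually_atTop.1 hev
  refine ⟨N, fun n hn x hx => ?_⟩
  obtain ⟨y, hy, hxy⟩ := Set.mem_iUnion₂.1 (htsub hx)
  have hxy' : ‖x - y‖ ≤ ε / (2 * (M + 1)) := by
    rw [← dist_eq_norm]
    exact (Metric.mem_ball.1 hxy).le
  calc ‖T n x‖ = ‖T n (x - y) + T n y‖ := by rw [map_sub, sub_add_cancel]
  _ ≤ ‖T n (x - y)‖ + ‖T n y‖ := norm_add_le _ _
  _ ≤ M * ‖x - y‖ + ε / 2 := by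
      gcongr
      · exact le_trans ((T n).le_opNorm _) (mul_le_mul_of_nonneg_right (hM n) (norm_nonneg _))
      · exact hN n hn y hy
  _ ≤ M * (ε / (2 * (M + 1))) + ε / 2 := by gcongr
  _ ≤ ε / 2 + ε / 2 := by
      have : M * (ε / (2 * (M + 1))) ≤ ε / 2 := by
        rw [mul_div_assoc', div_le_div_iff₀ (by positivity) (by positivity)]
        nlinarith
      linarith
  _ = ε := by ring

/-- image of the dual unit ball under precomposition with a compact operator
is totally bounded (Schauder-type lemma) -/
lemma tb_dual (K : E →L[ℂ] F) (hK : IsCompactOperator ⇑K) :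
    TotallyBounded ((fun f : F →L[ℂ] ℂ => f.comp K) '' Metric.closedBall 0 1) := by
  rw [Metric.totallyBounded_iff]
  intro ε hε
  classical
  -- finite ε/4 net of K '' closedBall 0 1
  have hKc : IsCompact (closure (⇑K '' Metric.closedBall 0 1)) :=
    hK.isCompact_closure_image_closedBall (𝕜₁ := ℂ) 1
  obtain ⟨t, htfin, htsub⟩ := (Metric.totallyBounded_iff.1 hKc.totallyBounded) (ε/4)
    (by positivity)
  haveI := htfin.fintype
  -- evaluation on the net
  let Θ : (F →L[ℂ] ℂ) → (t → ℂ) := fun f i => f i.1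
  obtain ⟨B, hB, hB0⟩ : ∃ B, (∀ y ∈ t, ‖y‖ ≤ B) ∧ 0 ≤ B := by
    obtain ⟨B, hB⟩ := (htfin.image fun y => ‖y‖).bddAbove
    exact ⟨max B 0, fun y hy => le_max_of_le_left (hB (Set.mem_image_of_mem _ hy)),
      le_max_right _ _⟩
  have hbd : Bornology.IsBounded (Θ '' Metric.closedBall 0 1) := by
    rw [Metric.isBounded_iff_subset_closedBall 0]
    refine ⟨B, ?_⟩
    rintro _ ⟨f, hf, rfl⟩
    rw [Metric.mem_closedBall, dist_zero_right]
    rw [Metric.mem_closedBall, dist_zero_right] at hf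
    rw [pi_norm_le_iff_of_nonneg hB0]
    intro i
    calc ‖Θ f i‖ ≤ ‖f‖ * ‖(i : F)‖ := f.le_opNorm _
    _ ≤ 1 * B := mul_le_mul hf (hB _ i.2) (norm_nonneg _) zero_le_one
    _ = B := one_mul _
  have htb : TotallyBounded (Θ '' Metric.closedBall 0 1) :=
    hbd.isCompact_closure.totallyBounded.subset subset_closure
  obtain ⟨s, hssub, hsfin, hscov⟩ := (totallyBounded_iff_subset.1 htb)
    {p : (t → ℂ) × (t → ℂ) | dist p.1 p.2 < ε/4} (Metric.dist_mem_uniformity (by positivity))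
  have hchoice : ∀ v ∈ s, ∃ f : F →L[ℂ] ℂ, f ∈ Metric.closedBall 0 1 ∧ Θ f = v := by
    intro v hv
    obtain ⟨f, hf, hfv⟩ := hssub hv
    exact ⟨f, hf, hfv⟩
  choose! g hg1 hg2 using hchoice
  refine ⟨(fun v => (g v).comp K) '' s, hsfin.image _, ?_⟩
  rintro _ ⟨f, hf, rfl⟩
  have hΘf : Θ f ∈ ⋃ v ∈ s, {x | (x, v) ∈ {p : (t → ℂ) × (t → ℂ) | dist p.1 p.2 < ε/4}} :=
    hscov ⟨f, hf, rfl⟩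
  obtain ⟨v, hv, hΘfv⟩ := Set.mem_iUnion₂.1 hΘf
  have hΘdist : dist (Θ f) (Θ (g v)) < ε/4 := by
    rw [hg2 v hv]; exact hΘfv
  refine Set.mem_iUnion₂.2 ⟨(g v).comp K, Set.mem_image_of_mem _ hv, ?_⟩
  rw [Metric.mem_ball, dist_eq_norm]
  have hfball : ‖f‖ ≤ 1 := by
    rw [Metric.mem_closedBall, dist_zero_right] at hf; exact hf
  have hgball : ‖g v‖ ≤ 1 := by
    have := hg1 v hv
    rw [Metric.mem_closedBall, dist_zero_right] at this; exact this
  have hnorm : ‖f.comp K - (g v).comp K‖ ≤ 3 * (ε/4) := by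
    rw [← ContinuousLinearMap.sub_comp]
    refine opnorm_le_unit _ (by positivity) fun x hx => ?_
    have hKx : K x ∈ closure (⇑K '' Metric.closedBall 0 1) :=
      subset_closure (Set.mem_image_of_mem _ (by simpa [Metric.mem_closedBall, dist_zero_right] using hx))
    obtain ⟨y, hy, hKxy⟩ := Set.mem_iUnion₂.1 (htsub hKx)
    have hKxy' : ‖K x - y‖ < ε/4 := by
      rw [← dist_eq_norm]; exact Metric.mem_ball.1 hKxy
    have hcoord : ‖f y - g v y‖ < ε/4 := by
      calc ‖f y - g v y‖ = dist (Θ f ⟨y, hy⟩) (Θ (g v) ⟨y, hy⟩) := by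
            rw [dist_eq_norm]
      _ ≤ dist (Θ f) (Θ (g v)) := dist_le_pi_dist _ _ _
      _ < ε/4 := hΘdist
    have hdiff : ‖f - g v‖ ≤ 2 := by
      calc ‖f - g v‖ ≤ ‖f‖ + ‖g v‖ := norm_sub_le _ _
      _ ≤ 2 := by linarith
    calc ‖(f - g v) (K x)‖ = ‖(f - g v) (K x - y) + (f - g v) y‖ := by
          rw [map_sub, sub_add_cancel]
    _ ≤ ‖(f - g v) (K x - y)‖ + ‖(f - g v) y‖ := norm_add_le _ _
    _ ≤ ‖f - g v‖ * ‖K x - y‖ + ‖f y - g v y‖ :=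
        add_le_add ((f - g v).le_opNorm _) (le_of_eq (by simp))
    _ ≤ 2 * (ε/4) + ε/4 :=
        add_le_add (mul_le_mul hdiff hKxy'.le (norm_nonneg _) (by norm_num)) hcoord.le
    _ = 3 * (ε/4) := by ring
  calc ‖f.comp K - (g v).comp K‖ ≤ 3 * (ε/4) := hnorm
  _ < ε := by linarith


variable {E F : Type*} [NormedAddCommGroup E] [NormedSpace ℂ E]
  [NormedAddCommGroup F] [NormedSpace ℂ F]

lemma shr_dual (Q : ℕ → E →L[ℂ] E) (hproj : ∀ m n, (Q m).comp (Q n) = Q (min m n))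
    (M : ℝ) (hM : ∀ n, ‖Q n‖ ≤ M)
    (hshr : Dense (⋃ n, Set.range fun f : E →L[ℂ] ℂ => f.comp (Q n)))
    (f : E →L[ℂ] ℂ) :
    Tendsto (fun n => f.comp (Q n) - f) atTop (𝓝 0) := by
  have hM0 : 0 ≤ M := (norm_nonneg _).trans (hM 0)
  rw [Metric.tendsto_atTop]
  intro ε hε
  have hδ : (0 : ℝ) < ε / (2 * (M + 2)) := by positivity
  obtain ⟨g, hgmem, hgd⟩ := Metric.mem_closure_iff.1 (hshr f) _ hδ
  obtain ⟨m, h, rfl⟩ : ∃ m, ∃ h : E →L[ℂ] ℂ, h.comp (Q m) = g := by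
    obtain ⟨m, hm⟩ := Set.mem_iUnion.1 hgmem
    obtain ⟨h, hh⟩ := hm
    exact ⟨m, h, hh⟩
  refine ⟨m, fun n hn => ?_⟩
  have hfix : (h.comp (Q m)).comp (Q n) = h.comp (Q m) := by
    rw [ContinuousLinearMap.comp_assoc, hproj, min_eq_left hn]
  have hd : ‖f - h.comp (Q m)‖ < ε / (2 * (M + 2)) := by
    rwa [← dist_eq_norm]
  rw [dist_eq_norm, sub_zero]
  calc ‖f.comp (Q n) - f‖
      = ‖(f - h.comp (Q m)).comp (Q n) + ((h.comp (Q m)).comp (Q n) - h.comp (Q m))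
          + (h.comp (Q m) - f)‖ := by
        congr 1
        rw [ContinuousLinearMap.sub_comp]
        abel
  _ ≤ ‖(f - h.comp (Q m)).comp (Q n)‖ + ‖(h.comp (Q m)).comp (Q n) - h.comp (Q m)‖
        + ‖h.comp (Q m) - f‖ := norm_add₃_le
  _ ≤ ‖f - h.comp (Q m)‖ * M + 0 + ‖f - h.comp (Q m)‖ := by
      gcongr
      · calc ‖(f - h.comp (Q m)).comp (Q n)‖ ≤ ‖f - h.comp (Q m)‖ * ‖Q n‖ :=
              ContinuousLinearMap.opNorm_comp_le _ _
        _ ≤ ‖f - h.comp (Q m)‖ * M := mul_le_mul_of_nonneg_left (hM n) (norm_nonneg _)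
      · rw [hfix, sub_self, norm_zero]
      · exact (norm_sub_rev _ _).le
  _ ≤ (ε / (2 * (M + 2))) * M + 0 + ε / (2 * (M + 2)) := by gcongr
  _ < ε := by
      rw [div_mul_eq_mul_div]
      have h1 : ε * M / (2 * (M + 2)) < ε / 2 := by
        rw [div_lt_div_iff₀ (by positivity) (by positivity)]
        nlinarith
      have h2 : ε / (2 * (M + 2)) < ε / 2 := by
        rw [div_lt_div_iff₀ (by positivity) (by positivity)]
        nlinarith
      linarith

lemma compact_HA (Q : ℕ → E →L[ℂ] E) (hproj : ∀ m n, (Q m).comp (Q n) = Q (min m n))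
    (M : ℝ) (hM : ∀ n, ‖Q n‖ ≤ M)
    (hlim : ∀ y : E, Tendsto (fun n => Q n y) atTop (𝓝 y))
    (hshr : Dense (⋃ n, Set.range fun f : E →L[ℂ] ℂ => f.comp (Q n)))
    (K : E →L[ℂ] E) (hK : IsCompactOperator ⇑K) :
    Tendsto (fun n => ((Q n).comp K).comp (Q n)) atTop (𝓝 K) := by
  have hM0 : 0 ≤ M := (norm_nonneg _).trans (hM 0)
  -- part (a) : ‖Q n ∘ K - K‖ → 0
  have ha : ∀ ε > 0, ∃ N, ∀ n ≥ N, ‖(Q n).comp K - K‖ ≤ ε := by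
    intro ε hε
    have hKtb : TotallyBounded (⇑K '' Metric.closedBall 0 1) :=
      ((hK.isCompact_closure_image_closedBall (𝕜₁ := ℂ) 1).totallyBounded).subset
        subset_closure
    have hpt : ∀ x : E, Tendsto (fun n => (Q n - ContinuousLinearMap.id ℂ E) x) atTop (𝓝 0) := by
      intro x
      simp only [ContinuousLinearMap.sub_apply, ContinuousLinearMap.id_apply]
      simpa using (hlim x).sub_const x
    have hMn : ∀ n, ‖Q n - ContinuousLinearMap.id ℂ E‖ ≤ M + 1 := by
      intro n
      calc ‖Q n - ContinuousLinearMap.id ℂ E‖ ≤ ‖Q n‖ + ‖ContinuousLinearMap.id ℂ E‖ :=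
            norm_sub_le _ _
      _ ≤ M + 1 := add_le_add (hM n) ContinuousLinearMap.norm_id_le
    obtain ⟨N, hN⟩ := unif_tb _ _ hMn hpt hKtb ε hε
    refine ⟨N, fun n hn => ?_⟩
    refine opnorm_le_unit _ hε.le fun x hx => ?_
    have hx' : K x ∈ ⇑K '' Metric.closedBall 0 1 :=
      Set.mem_image_of_mem _ (by simpa [Metric.mem_closedBall, dist_zero_right] using hx)
    have := hN n hn _ hx'
    simpa [ContinuousLinearMap.sub_apply] using this
  -- part (b) : ‖K ∘ Q n - K‖ → 0, via duality
  have hb : ∀ ε > 0, ∃ N, ∀ n ≥ N, ‖K.comp (Q n) - K‖ ≤ ε := by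
    intro ε hε
    set T : ℕ → (E →L[ℂ] ℂ) →L[ℂ] (E →L[ℂ] ℂ) := fun n =>
      (ContinuousLinearMap.compL ℂ E E ℂ).flip (Q n) - ContinuousLinearMap.id ℂ _ with hT
    have hTapp : ∀ n (g : E →L[ℂ] ℂ), T n g = g.comp (Q n) - g := by
      intro n g; rfl
    have hTpt : ∀ g : E →L[ℂ] ℂ, Tendsto (fun n => T n g) atTop (𝓝 0) := by
      intro g
      simp only [hTapp]
      exact shr_dual Q hproj M hM hshr g
    have hTM : ∀ n, ‖T n‖ ≤ M + 1 := by
      intro n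
      refine opnorm_le_unit _ (by positivity) fun g hg => ?_
      rw [hTapp]
      calc ‖g.comp (Q n) - g‖ ≤ ‖g.comp (Q n)‖ + ‖g‖ := norm_sub_le _ _
      _ ≤ ‖g‖ * M + ‖g‖ := by
          gcongr
          calc ‖g.comp (Q n)‖ ≤ ‖g‖ * ‖Q n‖ := ContinuousLinearMap.opNorm_comp_le _ _
          _ ≤ ‖g‖ * M := mul_le_mul_of_nonneg_left (hM n) (norm_nonneg _)
      _ ≤ 1 * M + 1 := add_le_add (mul_le_mul_of_nonneg_right hg hM0) hg
      _ = M + 1 := by ring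
    obtain ⟨N, hN⟩ := unif_tb T _ hTM hTpt (tb_dual K hK) ε hε
    refine ⟨N, fun n hn => ?_⟩
    refine opnorm_le_unit _ hε.le fun x hx => ?_
    refine NormedSpace.norm_le_dual_bound ℂ _ hε.le fun f => ?_
    rcases eq_or_ne f 0 with rfl | hf
    · simp
    · have hfn : 0 < ‖f‖ := norm_pos_iff.2 hf
      set f' : E →L[ℂ] ℂ := (‖f‖⁻¹ : ℂ) • f with hf'
      have hf'ball : f' ∈ Metric.closedBall (0 : E →L[ℂ] ℂ) 1 := by
        rw [Metric.mem_closedBall, dist_zero_right, hf']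
        calc ‖(‖f‖⁻¹ : ℂ) • f‖ ≤ ‖(‖f‖⁻¹ : ℂ)‖ * ‖f‖ :=
              ContinuousLinearMap.opNorm_smul_le _ _
        _ = 1 := by
            rw [norm_inv, Complex.norm_real, Real.norm_eq_abs, abs_of_nonneg hfn.le,
              inv_mul_cancel₀ hfn.ne']
      have hmem : f'.comp K ∈ (fun f : E →L[ℂ] ℂ => f.comp K) '' Metric.closedBall 0 1 :=
        Set.mem_image_of_mem _ hf'ball
      have hTn := hN n hn _ hmem
      have key : ‖f' ((K.comp (Q n) - K) x)‖ ≤ ε := by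
        have heq : f' ((K.comp (Q n) - K) x) = (T n (f'.comp K)) x := by
          rw [hTapp]
          simp [ContinuousLinearMap.sub_apply]
        rw [heq]
        calc ‖(T n (f'.comp K)) x‖ ≤ ‖T n (f'.comp K)‖ * ‖x‖ :=
              (T n (f'.comp K)).le_opNorm x
        _ ≤ ε * 1 := mul_le_mul hTn hx (norm_nonneg _) hε.le
        _ = ε := mul_one ε
      have heq2 : f ((K.comp (Q n) - K) x) = (‖f‖ : ℂ) * f' ((K.comp (Q n) - K) x) := by
        rw [hf']
        simp only [ContinuousLinearMap.smul_apply, smul_eq_mul]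
        rw [← mul_assoc]
        rw [mul_inv_cancel₀ (by exact_mod_cast hfn.ne')]
        rw [one_mul]
      rw [heq2, norm_mul]
      calc ‖(‖f‖ : ℂ)‖ * ‖f' ((K.comp (Q n) - K) x)‖
          = ‖f‖ * ‖f' ((K.comp (Q n) - K) x)‖ := by
            rw [Complex.norm_real, Real.norm_eq_abs, abs_of_nonneg (norm_nonneg f)]
      _ ≤ ‖f‖ * ε := mul_le_mul_of_nonneg_left key (norm_nonneg f)
      _ = ε * ‖f‖ := mul_comm _ _
  -- combine
  rw [tendsto_iff_norm_sub_tendsto_zero]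
  rw [Metric.tendsto_atTop]
  intro ε hε
  have hε4 : (0:ℝ) < ε / (4 * (M + 1)) := by positivity
  obtain ⟨N₁, hN₁⟩ := ha _ (show (0:ℝ) < ε/4 by positivity)
  obtain ⟨N₂, hN₂⟩ := hb _ hε4
  refine ⟨max N₁ N₂, fun n hn => ?_⟩
  have hn₁ : n ≥ N₁ := le_trans (le_max_left _ _) hn
  have hn₂ : n ≥ N₂ := le_trans (le_max_right _ _) hn
  rw [Real.dist_eq, sub_zero, abs_of_nonneg (norm_nonneg _)]
  have hid : ((Q n).comp K).comp (Q n) - K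
      = (Q n).comp (K.comp (Q n) - K) + ((Q n).comp K - K) := by
    rw [ContinuousLinearMap.comp_sub]
    rw [← ContinuousLinearMap.comp_assoc]
    abel
  rw [hid]
  calc ‖(Q n).comp (K.comp (Q n) - K) + ((Q n).comp K - K)‖
      ≤ ‖(Q n).comp (K.comp (Q n) - K)‖ + ‖(Q n).comp K - K‖ := norm_add_le _ _
  _ ≤ M * (ε / (4 * (M + 1))) + ε/4 := by
      refine add_le_add ?_ (hN₁ n hn₁)
      calc ‖(Q n).comp (K.comp (Q n) - K)‖ ≤ ‖Q n‖ * ‖K.comp (Q n) - K‖ :=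
            ContinuousLinearMap.opNorm_comp_le _ _
      _ ≤ M * (ε / (4 * (M + 1))) :=
          mul_le_mul (hM n) (hN₂ n hn₂) (norm_nonneg _) hM0
  _ < ε := by
      have : M * (ε / (4 * (M + 1))) ≤ ε/4 := by
        rw [mul_div_assoc', div_le_div_iff₀ (by positivity) (by positivity)]
        nlinarith
      linarith

lemma HA_closed (Q : ℕ → E →L[ℂ] E) (M : ℝ) (hM : ∀ n, ‖Q n‖ ≤ M)
    (Bs : ℕ → E →L[ℂ] E) (B : E →L[ℂ] E) (hBs : Tendsto Bs atTop (𝓝 B))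
    (h : ∀ k, Tendsto (fun n => ((Q n).comp (Bs k)).comp (Q n)) atTop (𝓝 (Bs k))) :
    Tendsto (fun n => ((Q n).comp B).comp (Q n)) atTop (𝓝 B) := by
  have hM0 : 0 ≤ M := (norm_nonneg _).trans (hM 0)
  rw [Metric.tendsto_atTop]
  intro ε hε
  have hδ : (0:ℝ) < ε / (3 * (M * M + 1)) := by positivity
  obtain ⟨k, hk⟩ : ∃ k, ‖Bs k - B‖ ≤ ε / (3 * (M * M + 1)) := by
    have := (tendsto_iff_norm_sub_tendsto_zero.1 hBs)
    obtain ⟨k, hk⟩ := (Metric.tendsto_atTop.1 this _ hδ) |>.imp fun k h => h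
    · refine ⟨k, ?_⟩
      have h2 := hk k le_rfl
      rw [Real.dist_eq, sub_zero, abs_of_nonneg (norm_nonneg _)] at h2
      exact h2.le
  obtain ⟨N, hN⟩ := Metric.tendsto_atTop.1 (h k) _ (show (0:ℝ) < ε/3 by positivity)
  refine ⟨N, fun n hn => ?_⟩
  have h1 := hN n hn
  rw [dist_eq_norm] at h1 ⊢
  have hid : ((Q n).comp B).comp (Q n) - B
      = ((Q n).comp (B - Bs k)).comp (Q n)
        + (((Q n).comp (Bs k)).comp (Q n) - Bs k) + (Bs k - B) := by
    rw [ContinuousLinearMap.comp_sub, ContinuousLinearMap.sub_comp]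
    abel
  rw [hid]
  calc ‖((Q n).comp (B - Bs k)).comp (Q n)
        + (((Q n).comp (Bs k)).comp (Q n) - Bs k) + (Bs k - B)‖
      ≤ ‖((Q n).comp (B - Bs k)).comp (Q n)‖
        + ‖((Q n).comp (Bs k)).comp (Q n) - Bs k‖ + ‖Bs k - B‖ := norm_add₃_le
  _ < M * M * ‖B - Bs k‖ + ε/3 + ε / (3 * (M * M + 1)) := by
      have hBk0 : ‖Bs k - B‖ ≤ ε / (3 * (M * M + 1)) := hk
      refine add_lt_add_of_lt_of_le (add_lt_add_of_le_of_lt ?_ h1) hBk0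
      · calc ‖((Q n).comp (B - Bs k)).comp (Q n)‖
            ≤ ‖(Q n).comp (B - Bs k)‖ * ‖Q n‖ := ContinuousLinearMap.opNorm_comp_le _ _
        _ ≤ (‖Q n‖ * ‖B - Bs k‖) * ‖Q n‖ :=
            mul_le_mul_of_nonneg_right (ContinuousLinearMap.opNorm_comp_le _ _) (norm_nonneg _)
        _ ≤ (M * ‖B - Bs k‖) * M := by
            refine mul_le_mul (mul_le_mul_of_nonneg_right (hM n) (norm_nonneg _)) (hM n)
              (norm_nonneg _) (by positivity)
        _ = M * M * ‖B - Bs k‖ := by ring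
  _ ≤ ε := by
      have hBk : ‖B - Bs k‖ ≤ ε / (3 * (M * M + 1)) := by
        rw [← norm_neg, neg_sub]; exact hk
      have h2 : M * M * ‖B - Bs k‖ ≤ ε/3 := by
        calc M * M * ‖B - Bs k‖ ≤ M * M * (ε / (3 * (M * M + 1))) := by
              exact mul_le_mul_of_nonneg_left hBk (by positivity)
        _ ≤ ε/3 := by
            rw [mul_div_assoc', div_le_div_iff₀ (by positivity) (by positivity)]
            nlinarith [mul_nonneg hM0 hM0]
      have h3 : ε / (3 * (M * M + 1)) ≤ ε/3 := by
        rw [div_le_div_iff₀ (by positivity) (by positivity)]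
        nlinarith [mul_nonneg hM0 hM0]
      linarith

variable {W X Y Z : Type*} [NormedAddCommGroup W] [NormedSpace ℂ W]
  [NormedAddCommGroup X] [NormedSpace ℂ X]
  [NormedAddCommGroup Y] [NormedSpace ℂ Y] [NormedAddCommGroup Z] [NormedSpace ℂ Z]

lemma icomp_right {f : X →L[ℂ] Y} (hf : IsCompactOperator ⇑f) (g : W →L[ℂ] X) :
    IsCompactOperator ⇑(f.comp g) := by
  exact hf.comp_clm g

lemma icomp_left {f : X →L[ℂ] Y} (hf : IsCompactOperator ⇑f) (g : Y →L[ℂ] Z) :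
    IsCompactOperator ⇑(g.comp f) := by
  exact hf.clm_comp g

lemma iadd {f g : X →L[ℂ] Y} (hf : IsCompactOperator ⇑f) (hg : IsCompactOperator ⇑g) :
    IsCompactOperator ⇑(f + g) := by
  exact hf.add hg

lemma ineg {f : X →L[ℂ] Y} (hf : IsCompactOperator ⇑f) : IsCompactOperator ⇑(-f) := by
  exact hf.neg

lemma isub {f g : X →L[ℂ] Y} (hf : IsCompactOperator ⇑f) (hg : IsCompactOperator ⇑g) :
    IsCompactOperator ⇑(f - g) := by
  exact hf.sub hg

lemma ismul (c : ℂ) {f : X →L[ℂ] Y} (hf : IsCompactOperator ⇑f) :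
    IsCompactOperator ⇑(c • f) := by
  exact hf.smul c

lemma isum {s : Finset ℕ} {f : ℕ → X →L[ℂ] Y} (hf : ∀ i ∈ s, IsCompactOperator ⇑(f i)) :
    IsCompactOperator ⇑(∑ i ∈ s, f i) := by
  classical
  induction s using Finset.induction_on with
  | empty => simpa using (isCompactOperator_zero :
      IsCompactOperator (0 : X → Y))
  | insert a s' hns ih =>
    rw [Finset.sum_insert hns]
    exact iadd (hf a (Finset.mem_insert_self a s'))
      (ih fun i hi => hf i (Finset.mem_insert_of_mem hi))

/-- the key asymptotic compactness estimate -/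
lemma claimA (P : ℕ → X →L[ℂ] X) (L : ℕ → X →L[ℂ] Y) (R : ℕ → Y →L[ℂ] X)
    (ML MR : ℝ) (hML : ∀ n, ‖L n‖ ≤ ML) (hMR : ∀ n, ‖R n‖ ≤ MR)
    (h1 : ∀ m n, m ≤ n → IsCompactOperator ⇑(L m - (L n).comp (P m)))
    (h4 : ∀ m n, m ≤ n → IsCompactOperator ⇑(R m - (P m).comp (R n)))
    (A : X →L[ℂ] X) {m n : ℕ} (hmn : m ≤ n) :
    cdK (((L m).comp A).comp (R m) - ((L n).comp A).comp (R n))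
      ≤ ML * MR * ‖((P m).comp A).comp (P m) - A‖ := by
  have hML0 : 0 ≤ ML := (norm_nonneg _).trans (hML 0)
  have hMR0 : 0 ≤ MR := (norm_nonneg _).trans (hMR 0)
  set D : Y →L[ℂ] Y := (L m - (L n).comp (P m)).comp (A.comp (R m))
    + ((((L n).comp (P m)).comp A).comp (R m - (P m).comp (R n))) with hD
  have hDc : IsCompactOperator ⇑D :=
    iadd (icomp_right (h1 m n hmn) _) (icomp_left (h4 m n hmn) _)
  have hid : ((L m).comp A).comp (R m) - ((L n).comp A).comp (R n) - D
      = ((L n).comp ((((P m).comp A).comp (P m)) - A)).comp (R n) := by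
    ext x
    simp [hD, ContinuousLinearMap.comp_apply, map_sub]
  calc cdK (((L m).comp A).comp (R m) - ((L n).comp A).comp (R n))
      ≤ ‖((L m).comp A).comp (R m) - ((L n).comp A).comp (R n) - D‖ := cdK_le _ hDc
  _ = ‖((L n).comp ((((P m).comp A).comp (P m)) - A)).comp (R n)‖ := by rw [hid]
  _ ≤ ‖(L n).comp ((((P m).comp A).comp (P m)) - A)‖ * ‖R n‖ :=
      ContinuousLinearMap.opNorm_comp_le _ _
  _ ≤ (‖L n‖ * ‖((P m).comp A).comp (P m) - A‖) * ‖R n‖ :=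
      mul_le_mul_of_nonneg_right (ContinuousLinearMap.opNorm_comp_le _ _) (norm_nonneg _)
  _ ≤ (ML * ‖((P m).comp A).comp (P m) - A‖) * MR := by
      refine mul_le_mul (mul_le_mul_of_nonneg_right (hML n) (norm_nonneg _)) (hMR n)
        (norm_nonneg _) (by positivity)
  _ = ML * MR * ‖((P m).comp A).comp (P m) - A‖ := by ring



lemma main_construction
    {X Y : Type*} [NormedAddCommGroup X] [NormedSpace ℂ X]
    [NormedAddCommGroup Y] [NormedSpace ℂ Y] [CompleteSpace Y]
    (P : ℕ → X →L[ℂ] X) (Q : ℕ → Y →L[ℂ] Y)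
    (hQ_proj : ∀ m n, (Q m).comp (Q n) = Q (min m n))
    (hQ_lim : ∀ y : Y, Tendsto (fun n => Q n y) atTop (𝓝 y))
    (hQ_shr : Dense (⋃ n, Set.range fun f : Y →L[ℂ] ℂ => f.comp (Q n)))
    (MQ : ℝ) (hMQ : ∀ n, ‖Q n‖ ≤ MQ)
    (L : ℕ → X →L[ℂ] Y) (R : ℕ → Y →L[ℂ] X)
    (ML MR : ℝ) (hML : ∀ n, ‖L n‖ ≤ ML) (hMR : ∀ n, ‖R n‖ ≤ MR)
    (h1 : ∀ m n, m ≤ n → IsCompactOperator ⇑(L m - (L n).comp (P m)))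
    (h4 : ∀ m n, m ≤ n → IsCompactOperator ⇑(R m - (P m).comp (R n)))
    (h2 : ∀ n, IsCompactOperator ⇑(L n - (Q n).comp (L n)))
    (h3 : ∀ n, IsCompactOperator ⇑(R n - (R n).comp (Q n)))
    (A : X →L[ℂ] X) (hA : Tendsto (fun n => ((P n).comp A).comp (P n)) atTop (𝓝 A)) :
    ∃ B : Y →L[ℂ] Y,
      Tendsto (fun j => ((Q j).comp B).comp (Q j)) atTop (𝓝 B) ∧
      Tendsto (fun n => cdK (B - ((L n).comp A).comp (R n))) atTop (𝓝 0) := by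
  have hML0 : 0 ≤ ML := (norm_nonneg _).trans (hML 0)
  have hMR0 : 0 ≤ MR := (norm_nonneg _).trans (hMR 0)
  have hAn : Tendsto (fun n => ‖((P n).comp A).comp (P n) - A‖) atTop (𝓝 0) :=
    tendsto_iff_norm_sub_tendsto_zero.1 hA
  have hNex : ∀ ε : ℝ, 0 < ε → ∃ N, ∀ j ≥ N, ‖((P j).comp A).comp (P j) - A‖ ≤ ε := by
    intro ε hε
    obtain ⟨N, hN⟩ := (Metric.tendsto_atTop.1 hAn) ε hε
    refine ⟨N, fun j hj => ?_⟩
    have := hN j hj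
    rw [Real.dist_eq, sub_zero, abs_of_nonneg (norm_nonneg _)] at this
    exact this.le
  have hNex' : ∀ k : ℕ, ∃ N, ∀ j ≥ N,
      ‖((P j).comp A).comp (P j) - A‖ ≤ (1/2)^k / (ML * MR + 1) :=
    fun k => hNex _ (by positivity)
  choose N hN using hNex'
  obtain ⟨nk, hnk0, hnksucc⟩ : ∃ nk : ℕ → ℕ, nk 0 = N 0
      ∧ ∀ k, nk (k+1) = max (N (k+1)) (nk k + 1) :=
    ⟨fun k => Nat.rec (N 0) (fun k ih => max (N (k+1)) (ih+1)) k, rfl, fun _ => rfl⟩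
  have hnk_ge : ∀ k, N k ≤ nk k := by
    intro k; cases k with
    | zero => rw [hnk0]
    | succ k => rw [hnksucc]; exact le_max_left _ _
  have hnk_lt : ∀ k, nk k < nk (k+1) := by
    intro k; rw [hnksucc]; exact lt_of_lt_of_le (Nat.lt_succ_self _) (le_max_right _ _)
  have hnk_mono : StrictMono nk := strictMono_nat_of_lt_succ hnk_lt
  have hnk_k : ∀ k, k ≤ nk k := fun k => hnk_mono.le_apply
  set FL : ℕ → Y →L[ℂ] Y := fun n => ((L n).comp A).comp (R n) with hFL
  have hsmall : ∀ k, ‖((P (nk k)).comp A).comp (P (nk k)) - A‖ ≤ (1/2)^k / (ML * MR + 1) :=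
    fun k => hN k _ (hnk_ge k)
  have harith : ∀ k : ℕ, ML * MR * ((1/2:ℝ)^k / (ML * MR + 1)) ≤ (1/2)^k := by
    intro k
    rw [mul_div_assoc', div_le_iff₀ (by positivity)]
    have h0 : (0:ℝ) ≤ (1/2:ℝ)^k := by positivity
    nlinarith [mul_nonneg hML0 hMR0]
  have hcd : ∀ k, cdK (FL (nk k) - FL (nk (k+1))) ≤ (1/2)^k := by
    intro k
    refine le_trans (le_trans (claimA P L R ML MR hML hMR h1 h4 A (hnk_lt k).le) ?_) (harith k)
    exact mul_le_mul_of_nonneg_left (hsmall k) (mul_nonneg hML0 hMR0)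
  have hDex : ∀ k, ∃ Dk : Y →L[ℂ] Y, IsCompactOperator ⇑Dk
      ∧ ‖FL (nk k) - FL (nk (k+1)) - Dk‖ ≤ 2 * (1/2)^k := by
    intro k
    obtain ⟨Dk, hDc, hDn⟩ := exists_compact_close (FL (nk k) - FL (nk (k+1)))
      (show (0:ℝ) < (1/2)^k by positivity)
    exact ⟨Dk, hDc, by nlinarith [hcd k]⟩
  choose D hDc hDn using hDex
  set G : ℕ → Y →L[ℂ] Y := fun k => FL (nk k) + ∑ i ∈ Finset.range k, D i with hG
  have hGd : ∀ k, dist (G k) (G (k+1)) ≤ 2 * (1/2)^k := by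
    intro k
    rw [dist_eq_norm]
    have hid : G k - G (k+1) = FL (nk k) - FL (nk (k+1)) - D k := by
      rw [hG]
      simp only
      rw [Finset.sum_range_succ]
      abel
    rw [hid]
    exact hDn k
  have hcauchy : CauchySeq G := cauchySeq_of_le_geometric (1/2) 2 (by norm_num) hGd
  obtain ⟨B, hB⟩ := cauchySeq_tendsto_of_complete hcauchy
  have hgeom : ∀ k, ‖B - G k‖ ≤ 4 * (1/2)^k := by
    intro k
    have hd := dist_le_of_le_geometric_of_tendsto (1/2) 2 (by norm_num) hGd hB k
    rw [dist_eq_norm] at hd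
    rw [← norm_neg, neg_sub]
    calc ‖G k - B‖ ≤ 2 * (1/2)^k / (1 - 1/2) := hd
    _ = 4 * (1/2)^k := by ring
  refine ⟨B, ?_, ?_⟩
  · -- B is horizontally approximable
    have hGk : ∀ k, Tendsto (fun j => ((Q j).comp (G k)).comp (Q j)) atTop (𝓝 (G k)) := by
      intro k
      set n := nk k with hn
      set T0 : Y →L[ℂ] Y := ((Q n).comp (FL n)).comp (Q n) with hT0
      have hCc : IsCompactOperator ⇑(G k - T0) := by
        have hid : G k - T0 = ((L n - (Q n).comp (L n)).comp (A.comp (R n))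
            + (((Q n).comp (L n)).comp A).comp (R n - (R n).comp (Q n)))
            + ∑ i ∈ Finset.range k, D i := by
          rw [hG, hT0, hFL]
          simp only
          ext x
          simp [ContinuousLinearMap.comp_apply, map_sub]
          abel
        rw [hid]
        exact iadd (iadd (icomp_right (h2 n) _) (icomp_left (h3 n) _))
          (isum fun i _ => hDc i)
      have hfix : Tendsto (fun j => ((Q j).comp T0).comp (Q j)) atTop (𝓝 T0) := by
        refine tendsto_atTop_of_eventually_const (i₀ := n) fun j hj => ?_
        have e1 : (Q j).comp (Q n) = Q n := by rw [hQ_proj, min_eq_right hj]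
        have e2 : (Q n).comp (Q j) = Q n := by rw [hQ_proj, min_eq_left hj]
        have e1' : ∀ w, Q j (Q n w) = Q n w := fun w => by
          have := congrArg (fun T : Y →L[ℂ] Y => T w) e1
          simpa using this
        have e2' : ∀ w, Q n (Q j w) = Q n w := fun w => by
          have := congrArg (fun T : Y →L[ℂ] Y => T w) e2
          simpa using this
        rw [hT0]
        ext x
        simp [ContinuousLinearMap.comp_apply, e1', e2']
      have hcomp := compact_HA Q hQ_proj MQ hMQ hQ_lim hQ_shr _ hCc
      have hfun : (fun j => ((Q j).comp (G k)).comp (Q j))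
          = fun j => ((Q j).comp T0).comp (Q j) + ((Q j).comp (G k - T0)).comp (Q j) := by
        funext j
        rw [← ContinuousLinearMap.add_comp, ← ContinuousLinearMap.comp_add]
        congr 2
        abel
      rw [hfun]
      have h5 := hfix.add hcomp
      rwa [show T0 + (G k - T0) = G k from by abel] at h5
    exact HA_closed Q MQ hMQ G B hB hGk
  · -- quantitative approximation
    have hfin : ∀ ε > 0, ∃ Nf, ∀ n ≥ Nf, cdK (B - FL n) ≤ ε := by
      intro ε hε
      obtain ⟨N₁, hN₁⟩ := hNex (ε / (2 * (ML * MR + 1))) (by positivity)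
      obtain ⟨k₀, hk₀⟩ := exists_pow_lt_of_lt_one (show (0:ℝ) < ε/8 by positivity)
        (show (1/2:ℝ) < 1 by norm_num)
      refine ⟨N₁, fun n hn => ?_⟩
      set k := max k₀ n with hk
      have hnk_n : n ≤ nk k := le_trans (le_max_right _ _) (hnk_k k)
      have hdecomp : B - FL n = ((B - G k) + (∑ i ∈ Finset.range k, D i))
          + (FL (nk k) - FL n) := by
        rw [hG]; simp only; abel
      have hflip : cdK (FL (nk k) - FL n) = cdK (FL n - FL (nk k)) := by
        rw [← neg_sub, cdK_neg]
      calc cdK (B - FL n)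
          ≤ cdK ((B - G k) + (∑ i ∈ Finset.range k, D i)) + cdK (FL (nk k) - FL n) := by
            rw [hdecomp]; exact cdK_add_le _ _
      _ ≤ (cdK (B - G k) + cdK (∑ i ∈ Finset.range k, D i)) + cdK (FL (nk k) - FL n) :=
            add_le_add (cdK_add_le _ _) le_rfl
      _ ≤ (‖B - G k‖ + 0) + ML * MR * ‖((P n).comp A).comp (P n) - A‖ := by
            refine add_le_add (add_le_add (cdK_le_norm _)
              (le_of_eq (cdK_zero_of_compact (isum fun i _ => hDc i)))) ?_
            rw [hflip]
            exact claimA P L R ML MR hML hMR h1 h4 A hnk_n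
      _ ≤ (4 * (1/2)^k + 0) + ML * MR * (ε / (2 * (ML * MR + 1))) := by
            refine add_le_add (add_le_add (hgeom k) le_rfl) ?_
            exact mul_le_mul_of_nonneg_left (hN₁ n hn) (mul_nonneg hML0 hMR0)
      _ ≤ ε/2 + ε/2 := by
            refine add_le_add ?_ ?_
            · have hpow : ((1:ℝ)/2)^k ≤ (1/2)^k₀ :=
                pow_le_pow_of_le_one (by norm_num) (by norm_num) (le_max_left _ _)
              calc 4 * ((1:ℝ)/2)^k + 0 = 4 * (1/2)^k := by ring
              _ ≤ 4 * (1/2)^k₀ := by nlinarith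
              _ ≤ 4 * (ε/8) := by nlinarith
              _ = ε/2 := by ring
            · rw [mul_div_assoc', div_le_div_iff₀ (by positivity) (by positivity)]
              nlinarith [mul_nonneg hML0 hMR0]
      _ = ε := by ring
    rw [Metric.tendsto_atTop]
    intro ε hε
    obtain ⟨Nf, hNf⟩ := hfin (ε/2) (half_pos hε)
    refine ⟨Nf, fun n hn => ?_⟩
    rw [Real.dist_eq, sub_zero, abs_of_nonneg (cdK_nonneg _)]
    exact lt_of_le_of_lt (hNf n hn) (half_lt_self hε)


end S8

/-- If `X` and `Y` have `C`-finitely Fredholm equivalent shrinking Schauder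
decompositions, then the quotient Banach algebras `HA(X)/K(X)` and `HA(Y)/K(Y)` are
isomorphic as Banach algebras, via an isomorphism `Φ̂` with `‖Φ̂‖·‖Φ̂⁻¹‖ ≤ C²`.  The
isomorphism of the quotients is expressed at the level of operators: a map `Φ` sending
horizontally approximable operators on `X` to horizontally approximable operators on `Y`,
which is an algebra homomorphism modulo compact operators, is bijective modulo compact
operators, and distorts the distances to the respective compact operator ideals by constants
`c₁, c₂` with `c₁ * c₂ ≤ C²`. -/
theorem stmt8 (X Y : Type*) [NormedAddCommGroup X] [NormedSpace ℂ X] [CompleteSpace X]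
    [NormedAddCommGroup Y] [NormedSpace ℂ Y] [CompleteSpace Y]
    (P : ℕ → X →L[ℂ] X) (Q : ℕ → Y →L[ℂ] Y)
    -- Schauder decompositions
    (hP_proj : ∀ m n, (P m).comp (P n) = P (min m n))
    (hP_lim : ∀ x : X, Tendsto (fun n => P n x) atTop (𝓝 x))
    (hQ_proj : ∀ m n, (Q m).comp (Q n) = Q (min m n))
    (hQ_lim : ∀ y : Y, Tendsto (fun n => Q n y) atTop (𝓝 y))
    -- shrinking
    (hP_shr : Dense (⋃ n, Set.range fun f : X →L[ℂ] ℂ => f.comp (P n)))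
    (hQ_shr : Dense (⋃ n, Set.range fun f : Y →L[ℂ] ℂ => f.comp (Q n)))
    -- C-finite Fredholm equivalence
    (C : ℝ) (hC : 1 ≤ C)
    (L : ℕ → X →L[ℂ] Y) (R : ℕ → Y →L[ℂ] X)
    (hLbdd : BddAbove (Set.range fun n => ‖L n‖))
    (hRbdd : BddAbove (Set.range fun n => ‖R n‖))
    (hbound : (⨆ n, ‖L n‖) * (⨆ n, ‖R n‖) ≤ C)
    (hcompat : ∀ m n, m ≤ n →
      IsCompactOperator ⇑(L m - (L n).comp (P m)) ∧
      IsCompactOperator ⇑(L m - (Q m).comp (L n)) ∧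
      IsCompactOperator ⇑(R m - (R n).comp (Q m)) ∧
      IsCompactOperator ⇑(R m - (P m).comp (R n)))
    (hfred : ∀ n, IsCompactOperator ⇑((R n).comp (L n) - P n) ∧
      IsCompactOperator ⇑((L n).comp (R n) - Q n))
    -- horizontally approximable operators and distances to the compact ideals
    (HAX : Set (X →L[ℂ] X)) (HAY : Set (Y →L[ℂ] Y))
    (hHAX : HAX = {A | Tendsto (fun n => ((P n).comp A).comp (P n)) atTop (𝓝 A)})
    (hHAY : HAY = {B | Tendsto (fun n => ((Q n).comp B).comp (Q n)) atTop (𝓝 B)})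
    (distKX : (X →L[ℂ] X) → ℝ) (distKY : (Y →L[ℂ] Y) → ℝ)
    (hdX : ∀ A, distKX A =
      sInf {r : ℝ | ∃ K : X →L[ℂ] X, IsCompactOperator ⇑K ∧ r = ‖A - K‖})
    (hdY : ∀ B, distKY B =
      sInf {r : ℝ | ∃ K : Y →L[ℂ] Y, IsCompactOperator ⇑K ∧ r = ‖B - K‖}) :
    ∃ (Φ : (X →L[ℂ] X) → (Y →L[ℂ] Y)) (c₁ c₂ : ℝ),
      0 < c₁ ∧ 0 < c₂ ∧ c₁ * c₂ ≤ C ^ 2 ∧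
      (∀ A ∈ HAX, Φ A ∈ HAY) ∧
      (∀ A ∈ HAX, ∀ B ∈ HAX,
        IsCompactOperator ⇑(Φ (A + B) - Φ A - Φ B) ∧
        (∀ c : ℂ, IsCompactOperator ⇑(Φ (c • A) - c • Φ A)) ∧
        IsCompactOperator ⇑(Φ (A.comp B) - (Φ A).comp (Φ B))) ∧
      (∀ A ∈ HAX, distKY (Φ A) ≤ c₁ * distKX A ∧ distKX A ≤ c₂ * distKY (Φ A)) ∧
      (∀ B ∈ HAY, ∃ A ∈ HAX, IsCompactOperator ⇑(Φ A - B)) := by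
  classical
  obtain ⟨MP, hMP⟩ : ∃ MP, ∀ n, ‖P n‖ ≤ MP := by
    apply banach_steinhaus
    intro x
    obtain ⟨c, hc⟩ := ((hP_lim x).norm).bddAbove_range
    exact ⟨c, fun n => hc (Set.mem_range_self n)⟩
  obtain ⟨MQ, hMQ⟩ : ∃ MQ, ∀ n, ‖Q n‖ ≤ MQ := by
    apply banach_steinhaus
    intro y
    obtain ⟨c, hc⟩ := ((hQ_lim y).norm).bddAbove_range
    exact ⟨c, fun n => hc (Set.mem_range_self n)⟩
  have hMP0 : 0 ≤ MP := (norm_nonneg _).trans (hMP 0)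
  set ML : ℝ := ⨆ n, ‖L n‖ with hMLdef
  set MR : ℝ := ⨆ n, ‖R n‖ with hMRdef
  have hMLn : ∀ n, ‖L n‖ ≤ ML := fun n => le_ciSup hLbdd n
  have hMRn : ∀ n, ‖R n‖ ≤ MR := fun n => le_ciSup hRbdd n
  have hML0 : 0 ≤ ML := (norm_nonneg _).trans (hMLn 0)
  have hMR0 : 0 ≤ MR := (norm_nonneg _).trans (hMRn 0)
  have hC0 : (0:ℝ) < C := lt_of_lt_of_le zero_lt_one hC
  have hMLMR : ML * MR ≤ C := hbound
  -- abbreviations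
  let FL : (X →L[ℂ] X) → ℕ → (Y →L[ℂ] Y) := fun A n => ((L n).comp A).comp (R n)
  let GR : (Y →L[ℂ] Y) → ℕ → (X →L[ℂ] X) := fun B n => ((R n).comp B).comp (L n)
  have hFL : ∀ A n, FL A n = ((L n).comp A).comp (R n) := fun _ _ => rfl
  have hGR : ∀ B n, GR B n = ((R n).comp B).comp (L n) := fun _ _ => rfl
  -- the construction
  have key : ∀ A ∈ HAX, ∃ B : Y →L[ℂ] Y, B ∈ HAY ∧
      Tendsto (fun n => S8.cdK (B - FL A n)) atTop (𝓝 0) := by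
    intro A hA
    rw [hHAX] at hA
    obtain ⟨B, hB1, hB2⟩ := S8.main_construction P Q hQ_proj hQ_lim hQ_shr MQ hMQ L R ML MR
      hMLn hMRn (fun m n h => (hcompat m n h).1) (fun m n h => (hcompat m n h).2.2.2)
      (fun n => (hcompat n n le_rfl).2.1) (fun n => (hcompat n n le_rfl).2.2.1) A hA
    exact ⟨B, by rw [hHAY]; exact hB1, hB2⟩
  choose Φ₀ hΦmem₀ hΦcd₀ using key
  let Φ : (X →L[ℂ] X) → (Y →L[ℂ] Y) := fun A => if h : A ∈ HAX then Φ₀ A h else 0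
  have hΦeq : ∀ (A) (h : A ∈ HAX), Φ A = Φ₀ A h := fun A h => dif_pos h
  have hΦmem : ∀ A ∈ HAX, Φ A ∈ HAY := fun A h => by rw [hΦeq A h]; exact hΦmem₀ A h
  have hΦcd : ∀ A (h : A ∈ HAX),
      Tendsto (fun n => S8.cdK (Φ A - FL A n)) atTop (𝓝 0) := by
    intro A h
    rw [hΦeq A h]
    exact hΦcd₀ A h
  have hΦcd' : ∀ A (h : A ∈ HAX),
      Tendsto (fun n => S8.cdK (FL A n - Φ A)) atTop (𝓝 0) := by
    intro A h
    have heq : (fun n => S8.cdK (FL A n - Φ A)) = fun n => S8.cdK (Φ A - FL A n) := by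
      funext n; rw [← neg_sub, S8.cdK_neg]
    rw [heq]; exact hΦcd A h
  have hdX' : ∀ A, distKX A = S8.cdK A := fun A => hdX A
  have hdY' : ∀ B, distKY B = S8.cdK B := fun B => hdY B
  -- helper : compactness from vanishing bounds
  have czY : ∀ (T : Y →L[ℂ] Y) (f : ℕ → ℝ), Tendsto f atTop (𝓝 0) →
      (∀ n, S8.cdK T ≤ f n) → IsCompactOperator ⇑T := by
    intro T f hf hb
    have h0 : S8.cdK T ≤ 0 := ge_of_tendsto hf (Eventually.of_forall hb)
    exact S8.compact_of_cdK_zero (le_antisymm h0 (S8.cdK_nonneg T))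
  have hPP : ∀ n (x : X), P n (P n x) = P n x := by
    intro n x
    have h := congrArg (fun T : X →L[ℂ] X => T x) (hP_proj n n)
    simpa using h
  have hFLnorm : ∀ (A : X →L[ℂ] X) n, ‖FL A n‖ ≤ ML * MR * ‖A‖ := by
    intro A n
    rw [hFL]
    calc ‖((L n).comp A).comp (R n)‖ ≤ ‖(L n).comp A‖ * ‖R n‖ :=
        ContinuousLinearMap.opNorm_comp_le _ _
    _ ≤ (‖L n‖ * ‖A‖) * ‖R n‖ :=
        mul_le_mul_of_nonneg_right (ContinuousLinearMap.opNorm_comp_le _ _) (norm_nonneg _)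
    _ ≤ (ML * ‖A‖) * MR := by
        refine mul_le_mul (mul_le_mul_of_nonneg_right (hMLn n) (norm_nonneg _)) (hMRn n)
          (norm_nonneg _) (by positivity)
    _ = ML * MR * ‖A‖ := by ring
  have hcdFL : ∀ (T : X →L[ℂ] X) n,
      S8.cdK (((L n).comp T).comp (R n)) ≤ ML * MR * S8.cdK T := by
    intro T n
    calc S8.cdK (((L n).comp T).comp (R n)) ≤ ‖L n‖ * ‖R n‖ * S8.cdK T := S8.cdK_conj_le T _ _
    _ ≤ ML * MR * S8.cdK T := by
        refine mul_le_mul_of_nonneg_right ?_ (S8.cdK_nonneg T)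
        exact mul_le_mul (hMLn n) (hMRn n) (norm_nonneg _) hML0
  have hcdGR : ∀ (T : Y →L[ℂ] Y) n,
      S8.cdK (((R n).comp T).comp (L n)) ≤ ML * MR * S8.cdK T := by
    intro T n
    calc S8.cdK (((R n).comp T).comp (L n)) ≤ ‖R n‖ * ‖L n‖ * S8.cdK T := S8.cdK_conj_le T _ _
    _ ≤ ML * MR * S8.cdK T := by
        refine mul_le_mul_of_nonneg_right ?_ (S8.cdK_nonneg T)
        calc ‖R n‖ * ‖L n‖ ≤ MR * ML := mul_le_mul (hMRn n) (hMLn n) (norm_nonneg _) hMR0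
        _ = ML * MR := mul_comm _ _
  have hHAXnorm : ∀ A ∈ HAX,
      Tendsto (fun n => ‖((P n).comp A).comp (P n) - A‖) atTop (𝓝 0) := by
    intro A hA
    rw [hHAX] at hA
    exact tendsto_iff_norm_sub_tendsto_zero.1 hA
  have hAP : ∀ A ∈ HAX, Tendsto (fun n => ‖A.comp (P n) - A‖) atTop (𝓝 0) := by
    intro A hA
    have hA' := hHAXnorm A hA
    have hbnd : ∀ n, ‖A.comp (P n) - A‖ ≤ (MP + 1) * ‖((P n).comp A).comp (P n) - A‖ := by
      intro n
      have hid : A.comp (P n) - ((P n).comp A).comp (P n)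
          = (A - ((P n).comp A).comp (P n)).comp (P n) := by
        ext x
        simp [ContinuousLinearMap.comp_apply, hPP]
      calc ‖A.comp (P n) - A‖
          ≤ ‖A.comp (P n) - ((P n).comp A).comp (P n)‖
            + ‖((P n).comp A).comp (P n) - A‖ := by
            rw [show A.comp (P n) - A = (A.comp (P n) - ((P n).comp A).comp (P n))
              + (((P n).comp A).comp (P n) - A) from by abel]
            exact norm_add_le _ _
      _ ≤ ‖A - ((P n).comp A).comp (P n)‖ * MP + ‖((P n).comp A).comp (P n) - A‖ := by
            rw [hid]
            refine add_le_add ?_ le_rfl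
            calc ‖(A - ((P n).comp A).comp (P n)).comp (P n)‖
                ≤ ‖A - ((P n).comp A).comp (P n)‖ * ‖P n‖ :=
                  ContinuousLinearMap.opNorm_comp_le _ _
            _ ≤ ‖A - ((P n).comp A).comp (P n)‖ * MP :=
                mul_le_mul_of_nonneg_left (hMP n) (norm_nonneg _)
      _ = (MP + 1) * ‖((P n).comp A).comp (P n) - A‖ := by
            rw [norm_sub_rev]
            ring
    refine squeeze_zero (fun n => norm_nonneg _) hbnd ?_
    simpa only [zero_add, add_zero, zero_mul, mul_zero] using hA'.const_mul (MP + 1)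
  have hPA : ∀ A ∈ HAX, Tendsto (fun n => ‖(P n).comp A - A‖) atTop (𝓝 0) := by
    intro A hA
    have hA' := hHAXnorm A hA
    have hAP' := hAP A hA
    have hbnd : ∀ n, ‖(P n).comp A - A‖
        ≤ MP * ‖A.comp (P n) - A‖ + ‖((P n).comp A).comp (P n) - A‖ := by
      intro n
      have hid : (P n).comp A - ((P n).comp A).comp (P n)
          = (P n).comp (A - A.comp (P n)) := by
        ext x
        simp [ContinuousLinearMap.comp_apply, map_sub]
      calc ‖(P n).comp A - A‖
          ≤ ‖(P n).comp A - ((P n).comp A).comp (P n)‖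
            + ‖((P n).comp A).comp (P n) - A‖ := by
            rw [show (P n).comp A - A = ((P n).comp A - ((P n).comp A).comp (P n))
              + (((P n).comp A).comp (P n) - A) from by abel]
            exact norm_add_le _ _
      _ ≤ MP * ‖A.comp (P n) - A‖ + ‖((P n).comp A).comp (P n) - A‖ := by
            refine add_le_add ?_ le_rfl
            rw [hid]
            calc ‖(P n).comp (A - A.comp (P n))‖ ≤ ‖P n‖ * ‖A - A.comp (P n)‖ :=
                  ContinuousLinearMap.opNorm_comp_le _ _
            _ ≤ MP * ‖A.comp (P n) - A‖ := by
                rw [norm_sub_rev]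
                exact mul_le_mul_of_nonneg_right (hMP n) (norm_nonneg _)
    refine squeeze_zero (fun n => norm_nonneg _) hbnd ?_
    have h6 := (hAP'.const_mul MP).add hA'
    simpa only [zero_add, add_zero, zero_mul, mul_zero] using h6
  have hHAX_add : ∀ A ∈ HAX, ∀ B ∈ HAX, A + B ∈ HAX := by
    intro A hA B hB
    rw [hHAX] at hA hB ⊢
    have heq : (fun n => ((P n).comp (A + B)).comp (P n))
        = fun n => ((P n).comp A).comp (P n) + ((P n).comp B).comp (P n) := by
      funext n
      rw [ContinuousLinearMap.comp_add, ContinuousLinearMap.add_comp]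
    rw [Set.mem_setOf_eq, heq]
    exact hA.add hB
  have hHAX_smul : ∀ (c : ℂ), ∀ A ∈ HAX, c • A ∈ HAX := by
    intro c A hA
    rw [hHAX] at hA ⊢
    have heq : (fun n => ((P n).comp (c • A)).comp (P n))
        = fun n => c • (((P n).comp A).comp (P n)) := by
      funext n
      ext x
      simp [ContinuousLinearMap.comp_apply]
    rw [Set.mem_setOf_eq, heq]
    exact hA.const_smul c
  have hHAX_mul : ∀ A ∈ HAX, ∀ B ∈ HAX, A.comp B ∈ HAX := by
    intro A hA B hB
    have hPAB := hPA A hA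
    have hBPB := hAP B hB
    rw [hHAX] at hA hB ⊢
    rw [Set.mem_setOf_eq, tendsto_iff_norm_sub_tendsto_zero]
    have hbnd : ∀ n, ‖((P n).comp (A.comp B)).comp (P n) - A.comp B‖
        ≤ ‖(P n).comp A - A‖ * (‖B‖ * MP) + ‖A‖ * ‖B.comp (P n) - B‖ := by
      intro n
      have hid : ((P n).comp (A.comp B)).comp (P n) - A.comp B
          = ((P n).comp A - A).comp (B.comp (P n)) + A.comp (B.comp (P n) - B) := by
        ext x
        simp [ContinuousLinearMap.comp_apply, map_sub]
      rw [hid]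
      calc ‖((P n).comp A - A).comp (B.comp (P n)) + A.comp (B.comp (P n) - B)‖
          ≤ ‖((P n).comp A - A).comp (B.comp (P n))‖ + ‖A.comp (B.comp (P n) - B)‖ :=
            norm_add_le _ _
      _ ≤ ‖(P n).comp A - A‖ * (‖B‖ * MP) + ‖A‖ * ‖B.comp (P n) - B‖ := by
          refine add_le_add ?_ (ContinuousLinearMap.opNorm_comp_le _ _)
          calc ‖((P n).comp A - A).comp (B.comp (P n))‖
              ≤ ‖(P n).comp A - A‖ * ‖B.comp (P n)‖ := ContinuousLinearMap.opNorm_comp_le _ _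
          _ ≤ ‖(P n).comp A - A‖ * (‖B‖ * MP) := by
              refine mul_le_mul_of_nonneg_left ?_ (norm_nonneg _)
              calc ‖B.comp (P n)‖ ≤ ‖B‖ * ‖P n‖ := ContinuousLinearMap.opNorm_comp_le _ _
              _ ≤ ‖B‖ * MP := mul_le_mul_of_nonneg_left (hMP n) (norm_nonneg _)
    refine squeeze_zero (fun n => norm_nonneg _) hbnd ?_
    have h6 := (hPAB.mul_const (‖B‖ * MP)).add (hBPB.const_mul ‖A‖)
    simpa only [zero_add, add_zero, zero_mul, mul_zero] using h6
  -- THE RESULT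
  refine ⟨Φ, C, C, hC0, hC0, le_of_eq (pow_two C).symm, hΦmem, ?_, ?_, ?_⟩
  · -- algebra homomorphism modulo compacts
    intro A hA B hB
    refine ⟨?_, ?_, ?_⟩
    · -- additivity
      have hABmem := hHAX_add A hA B hB
      have hFLadd : ∀ n, FL (A + B) n = FL A n + FL B n := by
        intro n
        rw [hFL, hFL, hFL, ContinuousLinearMap.comp_add, ContinuousLinearMap.add_comp]
      refine czY _ (fun n => S8.cdK (Φ (A + B) - FL (A + B) n)
          + S8.cdK (FL A n - Φ A) + S8.cdK (FL B n - Φ B)) ?_ ?_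
      · have h6 := ((hΦcd _ hABmem).add (hΦcd' A hA)).add (hΦcd' B hB)
        simpa only [zero_add, add_zero, zero_mul, mul_zero] using h6
      · intro n
        have hid : Φ (A + B) - Φ A - Φ B = (Φ (A + B) - FL (A + B) n)
            + ((FL A n - Φ A) + (FL B n - Φ B)) := by
          rw [hFLadd n]; abel
        rw [hid]
        calc S8.cdK ((Φ (A + B) - FL (A + B) n) + ((FL A n - Φ A) + (FL B n - Φ B)))
            ≤ S8.cdK (Φ (A + B) - FL (A + B) n)
              + S8.cdK ((FL A n - Φ A) + (FL B n - Φ B)) := S8.cdK_add_le _ _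
        _ ≤ S8.cdK (Φ (A + B) - FL (A + B) n)
            + (S8.cdK (FL A n - Φ A) + S8.cdK (FL B n - Φ B)) :=
              add_le_add le_rfl (S8.cdK_add_le _ _)
        _ = _ := by ring
    · -- homogeneity
      intro c
      have hcAmem := hHAX_smul c A hA
      have hFLsmul : ∀ n, FL (c • A) n = c • FL A n := by
        intro n
        rw [hFL, hFL]
        ext x
        simp [ContinuousLinearMap.comp_apply]
      refine czY _ (fun n => S8.cdK (Φ (c • A) - FL (c • A) n)
          + ‖c‖ * S8.cdK (FL A n - Φ A)) ?_ ?_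
      · have h6 := (hΦcd _ hcAmem).add ((hΦcd' A hA).const_mul ‖c‖)
        simpa only [zero_add, add_zero, zero_mul, mul_zero] using h6
      · intro n
        have hid : Φ (c • A) - c • Φ A = (Φ (c • A) - FL (c • A) n)
            + c • (FL A n - Φ A) := by
          rw [hFLsmul n, smul_sub]
          abel
        rw [hid]
        calc S8.cdK ((Φ (c • A) - FL (c • A) n) + c • (FL A n - Φ A))
            ≤ S8.cdK (Φ (c • A) - FL (c • A) n) + S8.cdK (c • (FL A n - Φ A)) :=
              S8.cdK_add_le _ _
        _ ≤ S8.cdK (Φ (c • A) - FL (c • A) n) + ‖c‖ * S8.cdK (FL A n - Φ A) :=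
              add_le_add le_rfl (S8.cdK_smul_le _ _)
    · -- multiplicativity
      have hABmem := hHAX_mul A hA B hB
      have hPB := hPA B hB
      refine czY _ (fun n => S8.cdK (Φ (A.comp B) - FL (A.comp B) n)
          + (ML * MR * ‖A‖) * ‖(P n).comp B - B‖
          + ((ML * MR * ‖A‖) * S8.cdK (FL B n - Φ B)
            + S8.cdK (FL A n - Φ A) * ‖Φ B‖)) ?_ ?_
      · have h1 := hΦcd _ hABmem
        have h2 := hPB.const_mul (ML * MR * ‖A‖)
        have h3 := (hΦcd' B hB).const_mul (ML * MR * ‖A‖)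
        have h4 := (hΦcd' A hA).mul_const ‖Φ B‖
        have h6 := (h1.add h2).add (h3.add h4)
        simpa only [zero_add, add_zero, zero_mul, mul_zero] using h6
      · intro n
        have hid : Φ (A.comp B) - (Φ A).comp (Φ B)
            = (Φ (A.comp B) - FL (A.comp B) n)
            + (FL (A.comp B) n - (FL A n).comp (FL B n))
            + ((FL A n).comp (FL B n) - (Φ A).comp (Φ B)) := by abel
        have step1 : S8.cdK (FL (A.comp B) n - (FL A n).comp (FL B n))
            ≤ (ML * MR * ‖A‖) * ‖(P n).comp B - B‖ := by
          have hc0 : IsCompactOperator ⇑(P n - (R n).comp (L n)) := by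
            have h7 := S8.ineg (hfred n).1
            rwa [neg_sub] at h7
          have hcpt : IsCompactOperator
              ⇑(((L n).comp (A.comp ((P n - (R n).comp (L n)).comp B))).comp (R n)) :=
            S8.icomp_right (S8.icomp_left (S8.icomp_left (S8.icomp_right hc0 B) A) (L n)) (R n)
          have hid2 : FL (A.comp B) n - (FL A n).comp (FL B n)
              - ((L n).comp (A.comp ((P n - (R n).comp (L n)).comp B))).comp (R n)
              = ((L n).comp (A.comp (B - (P n).comp B))).comp (R n) := by
            rw [hFL, hFL, hFL]
            ext x
            simp [ContinuousLinearMap.comp_apply, map_sub]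
          calc S8.cdK (FL (A.comp B) n - (FL A n).comp (FL B n))
              ≤ ‖FL (A.comp B) n - (FL A n).comp (FL B n)
                - ((L n).comp (A.comp ((P n - (R n).comp (L n)).comp B))).comp (R n)‖ :=
                S8.cdK_le _ hcpt
          _ = ‖((L n).comp (A.comp (B - (P n).comp B))).comp (R n)‖ := by rw [hid2]
          _ ≤ (ML * MR * ‖A‖) * ‖(P n).comp B - B‖ := by
              calc ‖((L n).comp (A.comp (B - (P n).comp B))).comp (R n)‖
                  ≤ ‖(L n).comp (A.comp (B - (P n).comp B))‖ * ‖R n‖ :=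
                    ContinuousLinearMap.opNorm_comp_le _ _
              _ ≤ (‖L n‖ * ‖A.comp (B - (P n).comp B)‖) * ‖R n‖ :=
                  mul_le_mul_of_nonneg_right (ContinuousLinearMap.opNorm_comp_le _ _)
                    (norm_nonneg _)
              _ ≤ (‖L n‖ * (‖A‖ * ‖B - (P n).comp B‖)) * ‖R n‖ := by
                  refine mul_le_mul_of_nonneg_right (mul_le_mul_of_nonneg_left
                    (ContinuousLinearMap.opNorm_comp_le _ _) (norm_nonneg _)) (norm_nonneg _)
              _ ≤ (ML * (‖A‖ * ‖B - (P n).comp B‖)) * MR := by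
                  refine mul_le_mul (mul_le_mul_of_nonneg_right (hMLn n) (by positivity))
                    (hMRn n) (norm_nonneg _) (by positivity)
              _ = (ML * MR * ‖A‖) * ‖B - (P n).comp B‖ := by ring
              _ = (ML * MR * ‖A‖) * ‖(P n).comp B - B‖ := by rw [norm_sub_rev]
        have step2 : S8.cdK ((FL A n).comp (FL B n) - (Φ A).comp (Φ B))
            ≤ (ML * MR * ‖A‖) * S8.cdK (FL B n - Φ B)
              + S8.cdK (FL A n - Φ A) * ‖Φ B‖ := by
          have hid3 : (FL A n).comp (FL B n) - (Φ A).comp (Φ B)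
              = (FL A n).comp (FL B n - Φ B) + (FL A n - Φ A).comp (Φ B) := by
            rw [ContinuousLinearMap.comp_sub, ContinuousLinearMap.sub_comp]
            abel
          rw [hid3]
          calc S8.cdK ((FL A n).comp (FL B n - Φ B) + (FL A n - Φ A).comp (Φ B))
              ≤ S8.cdK ((FL A n).comp (FL B n - Φ B))
                + S8.cdK ((FL A n - Φ A).comp (Φ B)) := S8.cdK_add_le _ _
          _ ≤ ‖FL A n‖ * S8.cdK (FL B n - Φ B) + S8.cdK (FL A n - Φ A) * ‖Φ B‖ :=
              add_le_add (S8.cdK_comp_left_le _ _) (S8.cdK_comp_right_le _ _)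
          _ ≤ (ML * MR * ‖A‖) * S8.cdK (FL B n - Φ B) + S8.cdK (FL A n - Φ A) * ‖Φ B‖ :=
              add_le_add (mul_le_mul_of_nonneg_right (hFLnorm A n) (S8.cdK_nonneg _)) le_rfl
        rw [hid]
        calc S8.cdK ((Φ (A.comp B) - FL (A.comp B) n)
              + (FL (A.comp B) n - (FL A n).comp (FL B n))
              + ((FL A n).comp (FL B n) - (Φ A).comp (Φ B)))
            ≤ S8.cdK ((Φ (A.comp B) - FL (A.comp B) n)
                + (FL (A.comp B) n - (FL A n).comp (FL B n)))
              + S8.cdK ((FL A n).comp (FL B n) - (Φ A).comp (Φ B)) := S8.cdK_add_le _ _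
        _ ≤ (S8.cdK (Φ (A.comp B) - FL (A.comp B) n)
              + S8.cdK (FL (A.comp B) n - (FL A n).comp (FL B n)))
            + S8.cdK ((FL A n).comp (FL B n) - (Φ A).comp (Φ B)) :=
            add_le_add (S8.cdK_add_le _ _) le_rfl
        _ ≤ (S8.cdK (Φ (A.comp B) - FL (A.comp B) n)
              + (ML * MR * ‖A‖) * ‖(P n).comp B - B‖)
            + ((ML * MR * ‖A‖) * S8.cdK (FL B n - Φ B)
              + S8.cdK (FL A n - Φ A) * ‖Φ B‖) :=
            add_le_add (add_le_add le_rfl step1) step2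
  · -- distance estimates
    intro A hA
    rw [hdX', hdY']
    constructor
    · -- cdK (Φ A) ≤ C * cdK A
      have hbnd : ∀ n, S8.cdK (Φ A) ≤ S8.cdK (Φ A - FL A n) + ML * MR * S8.cdK A := by
        intro n
        calc S8.cdK (Φ A) = S8.cdK ((Φ A - FL A n) + FL A n) := by rw [sub_add_cancel]
        _ ≤ S8.cdK (Φ A - FL A n) + S8.cdK (FL A n) := S8.cdK_add_le _ _
        _ ≤ S8.cdK (Φ A - FL A n) + ML * MR * S8.cdK A :=
            add_le_add le_rfl (hcdFL A n)
      have htd : Tendsto (fun n => S8.cdK (Φ A - FL A n) + ML * MR * S8.cdK A) atTop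
          (𝓝 (ML * MR * S8.cdK A)) := by
        have h6 := (hΦcd A hA).add (tendsto_const_nhds (x := ML * MR * S8.cdK A))
        simpa only [zero_add, add_zero, zero_mul, mul_zero] using h6
      have h7 : S8.cdK (Φ A) ≤ ML * MR * S8.cdK A :=
        ge_of_tendsto htd (Eventually.of_forall hbnd)
      calc S8.cdK (Φ A) ≤ ML * MR * S8.cdK A := h7
      _ ≤ C * S8.cdK A := mul_le_mul_of_nonneg_right hMLMR (S8.cdK_nonneg A)
    · -- cdK A ≤ C * cdK (Φ A)
      have hbnd : ∀ n, S8.cdK A ≤ ‖((P n).comp A).comp (P n) - A‖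
          + ML * MR * S8.cdK (FL A n - Φ A) + ML * MR * S8.cdK (Φ A) := by
        intro n
        have hdecomp : A = (A - GR (FL A n) n) + (GR (FL A n) n - GR (Φ A) n)
            + GR (Φ A) n := by abel
        have t1 : S8.cdK (A - GR (FL A n) n) ≤ ‖((P n).comp A).comp (P n) - A‖ := by
          have hc0 : IsCompactOperator ⇑(P n - (R n).comp (L n)) := by
            have h7 := S8.ineg (hfred n).1
            rwa [neg_sub] at h7
          set D : X →L[ℂ] X :=
            ((P n - (R n).comp (L n)).comp (A.comp (P n)))
            + ((((R n).comp (L n)).comp A).comp (P n - (R n).comp (L n))) with hD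
          have hDc : IsCompactOperator ⇑D :=
            S8.iadd (S8.icomp_right hc0 _) (S8.icomp_left hc0 _)
          have hid4 : A - GR (FL A n) n - D = A - ((P n).comp A).comp (P n) := by
            rw [hGR, hFL, hD]
            ext x
            simp [ContinuousLinearMap.comp_apply, map_sub]
          calc S8.cdK (A - GR (FL A n) n) ≤ ‖A - GR (FL A n) n - D‖ :=
              S8.cdK_le _ hDc
          _ = ‖A - ((P n).comp A).comp (P n)‖ := by rw [hid4]
          _ = ‖((P n).comp A).comp (P n) - A‖ := norm_sub_rev _ _
        have t2 : S8.cdK (GR (FL A n) n - GR (Φ A) n) ≤ ML * MR * S8.cdK (FL A n - Φ A) := by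
          have hid5 : GR (FL A n) n - GR (Φ A) n = ((R n).comp (FL A n - Φ A)).comp (L n) := by
            rw [hGR, hGR, ContinuousLinearMap.comp_sub, ContinuousLinearMap.sub_comp]
          rw [hid5]
          exact hcdGR _ n
        have t3 : S8.cdK (GR (Φ A) n) ≤ ML * MR * S8.cdK (Φ A) := by
          rw [hGR]; exact hcdGR _ n
        calc S8.cdK A = S8.cdK ((A - GR (FL A n) n) + (GR (FL A n) n - GR (Φ A) n)
            + GR (Φ A) n) := by rw [← hdecomp]
        _ ≤ S8.cdK ((A - GR (FL A n) n) + (GR (FL A n) n - GR (Φ A) n))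
            + S8.cdK (GR (Φ A) n) := S8.cdK_add_le _ _
        _ ≤ (S8.cdK (A - GR (FL A n) n) + S8.cdK (GR (FL A n) n - GR (Φ A) n))
            + S8.cdK (GR (Φ A) n) := add_le_add (S8.cdK_add_le _ _) le_rfl
        _ ≤ (‖((P n).comp A).comp (P n) - A‖ + ML * MR * S8.cdK (FL A n - Φ A))
            + ML * MR * S8.cdK (Φ A) := add_le_add (add_le_add t1 t2) t3
        _ = _ := by ring
      have htd : Tendsto (fun n => ‖((P n).comp A).comp (P n) - A‖
          + ML * MR * S8.cdK (FL A n - Φ A) + ML * MR * S8.cdK (Φ A)) atTop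
          (𝓝 (ML * MR * S8.cdK (Φ A))) := by
        have h1 := hHAXnorm A hA
        have h2 := (hΦcd' A hA).const_mul (ML * MR)
        have h3 := (h1.add h2).add (tendsto_const_nhds (x := ML * MR * S8.cdK (Φ A)))
        simpa only [zero_add, add_zero, zero_mul, mul_zero] using h3
      have h7 : S8.cdK A ≤ ML * MR * S8.cdK (Φ A) :=
        ge_of_tendsto htd (Eventually.of_forall hbnd)
      calc S8.cdK A ≤ ML * MR * S8.cdK (Φ A) := h7
      _ ≤ C * S8.cdK (Φ A) := mul_le_mul_of_nonneg_right hMLMR (S8.cdK_nonneg _)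
  · -- surjectivity modulo compacts
    intro B hB
    have hB' : Tendsto (fun n => ((Q n).comp B).comp (Q n)) atTop (𝓝 B) := by
      rw [hHAY] at hB; exact hB
    obtain ⟨A, hA1, hA2⟩ := S8.main_construction Q P hP_proj hP_lim hP_shr MP hMP R L MR ML
      hMRn hMLn (fun m n h => (hcompat m n h).2.2.1) (fun m n h => (hcompat m n h).2.1)
      (fun n => (hcompat n n le_rfl).2.2.2) (fun n => (hcompat n n le_rfl).1) B hB'
    have hAX : A ∈ HAX := by rw [hHAX]; exact hA1
    refine ⟨A, hAX, ?_⟩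
    have hBnorm : Tendsto (fun n => ‖((Q n).comp B).comp (Q n) - B‖) atTop (𝓝 0) :=
      tendsto_iff_norm_sub_tendsto_zero.1 hB'
    refine czY _ (fun n => S8.cdK (Φ A - FL A n)
        + ML * MR * S8.cdK (A - ((R n).comp B).comp (L n))
        + ‖((Q n).comp B).comp (Q n) - B‖) ?_ ?_
    · have h1 := hΦcd A hAX
      have h2 := hA2.const_mul (ML * MR)
      have h3 := (h1.add h2).add hBnorm
      simpa only [zero_add, add_zero, zero_mul, mul_zero] using h3
    · intro n
      have hid : Φ A - B = (Φ A - FL A n)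
          + (FL A n - FL (((R n).comp B).comp (L n)) n)
          + (FL (((R n).comp B).comp (L n)) n - B) := by abel
      have t2 : S8.cdK (FL A n - FL (((R n).comp B).comp (L n)) n)
          ≤ ML * MR * S8.cdK (A - ((R n).comp B).comp (L n)) := by
        have hid2 : FL A n - FL (((R n).comp B).comp (L n)) n
            = ((L n).comp (A - ((R n).comp B).comp (L n))).comp (R n) := by
          rw [hFL, hFL, ContinuousLinearMap.comp_sub, ContinuousLinearMap.sub_comp]
        rw [hid2]
        exact hcdFL _ n
      have t3 : S8.cdK (FL (((R n).comp B).comp (L n)) n - B)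
          ≤ ‖((Q n).comp B).comp (Q n) - B‖ := by
        have hc0 : IsCompactOperator ⇑((L n).comp (R n) - Q n) := (hfred n).2
        set D : Y →L[ℂ] Y :=
          (((L n).comp (R n) - Q n).comp (B.comp ((L n).comp (R n))))
          + (((Q n).comp B).comp ((L n).comp (R n) - Q n)) with hD
        have hDc : IsCompactOperator ⇑D :=
          S8.iadd (S8.icomp_right hc0 _) (S8.icomp_left hc0 _)
        have hid3 : FL (((R n).comp B).comp (L n)) n - B - D
            = ((Q n).comp B).comp (Q n) - B := by
          rw [hFL, hD]
          ext x
          simp [ContinuousLinearMap.comp_apply, map_sub]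
        calc S8.cdK (FL (((R n).comp B).comp (L n)) n - B)
            ≤ ‖FL (((R n).comp B).comp (L n)) n - B - D‖ := S8.cdK_le _ hDc
        _ = ‖((Q n).comp B).comp (Q n) - B‖ := by rw [hid3]
      rw [hid]
      calc S8.cdK ((Φ A - FL A n)
            + (FL A n - FL (((R n).comp B).comp (L n)) n)
            + (FL (((R n).comp B).comp (L n)) n - B))
          ≤ S8.cdK ((Φ A - FL A n) + (FL A n - FL (((R n).comp B).comp (L n)) n))
            + S8.cdK (FL (((R n).comp B).comp (L n)) n - B) := S8.cdK_add_le _ _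
      _ ≤ (S8.cdK (Φ A - FL A n) + S8.cdK (FL A n - FL (((R n).comp B).comp (L n)) n))
          + S8.cdK (FL (((R n).comp B).comp (L n)) n - B) :=
          add_le_add (S8.cdK_add_le _ _) le_rfl
      _ ≤ (S8.cdK (Φ A - FL A n) + ML * MR * S8.cdK (A - ((R n).comp B).comp (L n)))
          + ‖((Q n).comp B).comp (Q n) - B‖ := add_le_add (add_le_add le_rfl t2) t3
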